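/- arXiv:2410.22772 — 5 statements merged into one kernel-verified Lean document; each statement's English description precedes it below -/
import Mathlib

section
/- Let S be a nonempty finite set and p : S → ℝ a function with p(x) > 0 for all x ∈ S. For a linear ordering of S given by a bijection σ : Fin |S| → S, define the ordered support Sord(σ) = ∏_{i=0}^{|S|-1} p(σ(i)) / (∑_{j=i}^{|S|-1} p(σ(j))). Then the sum of Sord(σ) over all bijections σ : Fin |S| → S equals 1 (Plackett–Luce normalization). -/
open Finset

private def finSuccNe {n : ℕ} : Fin n ≃ {i : Fin (n+1) // i ≠ 0} where
  toFun i := ⟨i.succ, Fin.succ_ne_zero i⟩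
  invFun j := j.1.pred j.2
  left_inv i := by simp
  right_inv j := by simp

private def extendEquiv {n : ℕ} {S : Type*} [DecidableEq S] (x : S)
    (τ : Fin n ≃ {y : S // y ≠ x}) : Fin (n+1) ≃ S where
  toFun := Fin.cases x (fun i => (τ i).1)
  invFun y := if h : y = x then 0 else (τ.symm ⟨y, h⟩).succ
  left_inv i := by
    induction i using Fin.cases with
    | zero => simp
    | succ i => simp [(τ i).2]
  right_inv y := by
    by_cases h : y = x
    · simp [h]
    · simp [h]

private theorem extend_bij {n : ℕ} {S : Type*} [DecidableEq S] :
    Function.Bijective (fun pr : Σ x : S, (Fin n ≃ {y : S // y ≠ x}) =>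
      extendEquiv pr.1 pr.2) := by
  constructor
  · rintro ⟨x, τ⟩ ⟨x', τ'⟩ h
    simp only at h
    have hx : x = x' := by
      have := congrArg (fun e : Fin (n+1) ≃ S => e 0) h
      simpa [extendEquiv] using this
    subst hx
    have hτ : τ = τ' := by
      ext i
      have := congrArg (fun e : Fin (n+1) ≃ S => e i.succ) h
      simpa [extendEquiv] using this
    rw [hτ]
  · intro σ
    refine ⟨⟨σ 0, finSuccNe.trans (Equiv.subtypeEquiv σ fun i => σ.injective.ne_iff.symm)⟩, ?_⟩
    ext i
    induction i using Fin.cases with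
    | zero => simp [extendEquiv]
    | succ i => simp [extendEquiv, finSuccNe]

private theorem pl_aux : ∀ (n : ℕ) (S : Type*) [Fintype S] [DecidableEq S]
    (_ : Fintype.card S = n) (p : S → ℝ) (_ : ∀ x, 0 < p x),
    ∑ σ : Fin n ≃ S, ∏ i : Fin n, p (σ i) / ∑ j ∈ Finset.Ici i, p (σ j) = 1 := by
  intro n
  induction n with
  | zero =>
    intro S _ _ hcard p hp
    have he : Fin 0 ≃ S := (Fintype.equivFinOfCardEq hcard).symm
    have : ∀ σ : Fin 0 ≃ S, (∏ i : Fin 0, p (σ i) / ∑ j ∈ Finset.Ici i, p (σ j)) = 1 := by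
      intro σ; simp
    rw [Finset.sum_congr rfl (fun σ _ => this σ), Finset.sum_const]
    simp [Finset.card_univ, Fintype.card_equiv he]
  | succ n ih =>
    intro S _ _ hcard p hp
    have hT : 0 < ∑ y : S, p y := by
      have : Nonempty S := Fintype.card_pos_iff.mp (by omega)
      exact Finset.sum_pos (fun y _ => hp y) univ_nonempty
    set T := ∑ y : S, p y with hTdef
    have key : ∀ (x : S) (τ : Fin n ≃ {y : S // y ≠ x}),
        (∏ i : Fin (n+1), p (extendEquiv x τ i) / ∑ j ∈ Finset.Ici i, p (extendEquiv x τ j))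
        = (p x / T) * ∏ i : Fin n, p ((τ i).1) / ∑ j ∈ Finset.Ici i, p ((τ j).1) := by
      intro x τ
      rw [Fin.prod_univ_succ]
      congr 1
      · have h0 : (Finset.Ici (0 : Fin (n+1))) = Finset.univ := by
          ext k; simp [Fin.zero_le]
        have hs : ∑ j : Fin (n+1), p (extendEquiv x τ j) = T := Equiv.sum_comp _ _
        rw [h0, hs]
        simp [extendEquiv]
      · refine Finset.prod_congr rfl fun i _ => ?_
        have hnum : extendEquiv x τ i.succ = (τ i).1 := rfl
        have hIci : Finset.Ici i.succ = (Finset.Ici i).image Fin.succ := by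
          ext k
          simp only [Finset.mem_Ici, Finset.mem_image]
          constructor
          · intro hk
            induction k using Fin.cases with
            | zero => exact absurd (Fin.le_zero_iff.mp hk) (Fin.succ_ne_zero _)
            | succ k => exact ⟨k, Fin.succ_le_succ_iff.mp hk, rfl⟩
          · rintro ⟨j, hj, rfl⟩
            exact Fin.succ_le_succ_iff.mpr hj
        have hden : ∑ j ∈ Finset.Ici i.succ, p (extendEquiv x τ j)
            = ∑ j ∈ Finset.Ici i, p ((τ j).1) := by
          rw [hIci, Finset.sum_image (fun a _ b _ h => Fin.succ_injective _ h)]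
          exact Finset.sum_congr rfl fun j _ => by simp [extendEquiv]
        rw [hnum, hden]
    have hbij := extend_bij (n := n) (S := S)
    rw [← Fintype.sum_bijective _ hbij
      (fun pr => ∏ i : Fin (n+1), p (extendEquiv pr.1 pr.2 i) /
        ∑ j ∈ Finset.Ici i, p (extendEquiv pr.1 pr.2 j)) _ (fun pr => rfl)]
    rw [← Finset.univ_sigma_univ, Finset.sum_sigma]
    have hrest : ∀ x : S,
        ∑ τ : Fin n ≃ {y : S // y ≠ x},
          ∏ i : Fin n, p ((τ i).1) / ∑ j ∈ Finset.Ici i, p ((τ j).1) = 1 := by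
      intro x
      have hc : Fintype.card {y : S // y ≠ x} = n := by
        have := Fintype.card_subtype_compl (fun y : S => y = x)
        simp only [Fintype.card_subtype_eq] at this
        simp only [ne_eq]
        omega
      exact ih {y : S // y ≠ x} hc (fun y => p y.1) (fun y => hp y.1)
    calc ∑ x : S, ∑ τ : Fin n ≃ {y : S // y ≠ x},
          (∏ i : Fin (n+1), p (extendEquiv x τ i) / ∑ j ∈ Finset.Ici i, p (extendEquiv x τ j))
        = ∑ x : S, (p x / T) * 1 := by
          refine Finset.sum_congr rfl fun x _ => ?_
          rw [← hrest x, Finset.mul_sum]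
          exact Finset.sum_congr rfl fun τ _ => key x τ
      _ = 1 := by
          simp only [mul_one]
          rw [← Finset.sum_div, ← hTdef]
          exact div_self hT.ne'

theorem plackett_luce_normalization {S : Type*} [Fintype S] [DecidableEq S] [Nonempty S]
    (p : S → ℝ) (hp : ∀ x, 0 < p x) :
    ∑ σ : Fin (Fintype.card S) ≃ S,
      ∏ i : Fin (Fintype.card S), p (σ i) / ∑ j ∈ Finset.Ici i, p (σ j) = 1 := by
  exact pl_aux (Fintype.card S) S rfl p hp
end

section
/- Let m : Finset Θ → ℝ be a basic probability assignment on a finite frame Θ (m(∅) = 0, m nonnegative, ∑_{F ⊆ Θ} m(F) = 1), and let p : Θ → ℝ be strictly positive. Define the permutation mass function μ on injective tuples by μ(A) = m(elements of A) · Sord_p(A), where Sord_p(A) = ∏_{i=1}^{|A|} p(β_i)/∑_{j=i}^{|A|} p(β_j). Then ∑_{A ∈ PES(Θ), A ≠ ∅} μ(A) = 1, i.e., μ is a permutation mass function. -/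
/-- Ordered support degree (Plackett–Luce) of a finite ordered tuple. -/
noncomputable def Sord {α : Type*} (p : α → ℝ) : List α → ℝ
  | [] => 1
  | a :: t => (p a / (p a + (t.map p).sum)) * Sord p t

lemma mem_perms {Θ : Type*} [DecidableEq Θ] (F : Finset Θ) (l : List Θ) :
    l ∈ F.toList.permutations.toFinset ↔ l.Nodup ∧ l.toFinset = F := by
  rw [List.mem_toFinset, List.mem_permutations]
  constructor
  · intro h
    exact ⟨h.nodup_iff.mpr F.nodup_toList, by rw [List.toFinset_eq_of_perm _ _ h, Finset.toList_toFinset]⟩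
  · rintro ⟨h1, h2⟩
    exact List.perm_of_nodup_nodup_toFinset_eq h1 F.nodup_toList
      (by rw [h2, Finset.toList_toFinset])

lemma sum_Sord {Θ : Type*} [DecidableEq Θ] (p : Θ → ℝ) (hp : ∀ x, 0 < p x) :
    ∀ (n : ℕ) (F : Finset Θ), F.card = n →
      ∑ l ∈ F.toList.permutations.toFinset, Sord p l = 1 := by
  intro n
  induction n with
  | zero =>
    intro F hF
    rw [Finset.card_eq_zero] at hF
    subst hF
    simp [Sord]
  | succ n ih =>
    intro F hF
    have hFne : F.Nonempty := Finset.card_pos.mp (hF ▸ n.succ_pos)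
    set T := ∑ x ∈ F, p x with hT
    have hTpos : 0 < T := Finset.sum_pos (fun x _ => hp x) hFne
    have key : ∑ l ∈ F.toList.permutations.toFinset, Sord p l
        = ∑ x ∈ F.sigma (fun a => ((F.erase a).toList.permutations.toFinset)),
            Sord p (x.1 :: x.2) := by
      symm
      apply Finset.sum_bij (fun x _ => x.1 :: x.2)
      · rintro ⟨a, t⟩ hx
        rw [Finset.mem_sigma] at hx
        obtain ⟨ha, ht⟩ := hx
        rw [mem_perms] at ht ⊢
        simp only at ha ht ⊢
        refine ⟨List.nodup_cons.mpr ⟨?_, ht.1⟩, ?_⟩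
        · intro hat
          exact Finset.notMem_erase a F (ht.2 ▸ List.mem_toFinset.mpr hat)
        · rw [List.toFinset_cons, ht.2, Finset.insert_erase ha]
      · rintro ⟨a, t⟩ hx ⟨a', t'⟩ hx' h
        simp only [List.cons.injEq] at h
        simp [h.1, h.2]
      · intro l hl
        rw [mem_perms] at hl
        obtain ⟨hnd, htf⟩ := hl
        match l, hnd, htf with
        | [], _, htf => exact absurd htf.symm (by simpa using hFne.ne_empty)
        | a :: t, hnd, htf =>
          have ha : a ∈ F := by
            rw [← htf]; simp
          refine ⟨⟨a, t⟩, Finset.mem_sigma.mpr ⟨ha, ?_⟩, rfl⟩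
          rw [mem_perms]
          rw [List.nodup_cons] at hnd
          refine ⟨hnd.2, ?_⟩
          rw [List.toFinset_cons] at htf
          rw [← htf, Finset.erase_insert (by simpa using hnd.1)]
      · intros; rfl
    rw [key, Finset.sum_sigma]
    have step : ∀ a ∈ F,
        ∑ t ∈ (F.erase a).toList.permutations.toFinset, Sord p (a :: t) = p a / T := by
      intro a ha
      have : ∀ t ∈ (F.erase a).toList.permutations.toFinset,
          Sord p (a :: t) = p a / T * Sord p t := by
        intro t ht
        rw [mem_perms] at ht
        have hsum : (t.map p).sum = ∑ x ∈ F.erase a, p x := by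
          rw [← ht.2, List.sum_toFinset p ht.1]
        show (p a / (p a + (t.map p).sum)) * Sord p t = _
        rw [hsum, Finset.add_sum_erase F p ha]
      rw [Finset.sum_congr rfl this, ← Finset.mul_sum,
        ih (F.erase a) (by rw [Finset.card_erase_of_mem ha, hF]; rfl), mul_one]
    rw [Finset.sum_congr rfl step, ← Finset.sum_div, div_self hTpos.ne']

theorem rps_transformation_is_pmf {Θ : Type*} [Fintype Θ] [DecidableEq Θ]
    (m : Finset Θ → ℝ) (hm0 : m ∅ = 0) (hmnn : ∀ F, 0 ≤ m F)
    (hm1 : ∑ F : Finset Θ, m F = 1)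
    (p : Θ → ℝ) (hp : ∀ x, 0 < p x) :
    ∑ A ∈ Finset.univ.filter (fun A : {l : List Θ // l.Nodup} => A.1 ≠ []),
      m A.1.toFinset * Sord p A.1 = 1 := by
  classical
  set S := Finset.univ.filter (fun A : {l : List Θ // l.Nodup} => A.1 ≠ []) with hS
  rw [← Finset.sum_fiberwise_of_maps_to (g := fun A : {l : List Θ // l.Nodup} => A.1.toFinset)
    (t := Finset.univ) (fun i _ => Finset.mem_univ _)]
  rw [← hm1]
  apply Finset.sum_congr rfl
  intro F _
  by_cases hF : F = ∅
  · subst hF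
    rw [hm0]
    apply Finset.sum_eq_zero
    intro A hA
    simp only [Finset.mem_filter, hS] at hA
    exact absurd (List.toFinset_eq_empty_iff _ |>.mp hA.2) hA.1.2
  · have hFne : F.Nonempty := Finset.nonempty_iff_ne_empty.mpr hF
    have : ∑ A ∈ S.filter (fun A => A.1.toFinset = F), m A.1.toFinset * Sord p A.1
        = ∑ l ∈ F.toList.permutations.toFinset, m F * Sord p l := by
      apply Finset.sum_bij (fun A _ => A.1)
      · intro A hA
        simp only [Finset.mem_filter, hS, Finset.mem_univ, true_and] at hA
        rw [mem_perms]
        exact ⟨A.2, hA.2⟩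
      · intro A _ A' _ h
        exact Subtype.ext h
      · intro l hl
        rw [mem_perms] at hl
        refine ⟨⟨l, hl.1⟩, ?_, rfl⟩
        simp only [Finset.mem_filter, hS, Finset.mem_univ, true_and]
        refine ⟨?_, hl.2⟩
        intro h
        rw [h] at hl
        exact hF hl.2.symm
      · intro A hA
        simp only [Finset.mem_filter, hS] at hA
        rw [hA.2]
    rw [this, ← Finset.mul_sum, sum_Sord p hp F.card F rfl, mul_one]
end

section
/- Let Θ be a finite set, μ_1, μ_2 permutation mass functions on PES(Θ), and suppose the conflict K→ = ∑_{B,C : B ∩→ C = ∅} μ_1(B)·μ_2(C) satisfies K→ < 1. Define the right orthogonal sum μ^R(A) = (1/(1−K→))·∑_{B ∩→ C = A} μ_1(B)·μ_2(C) for A ≠ ∅ and μ^R(∅) = 0, where B ∩→ C is the tuple obtained from C by deleting entries not occurring in B. Then μ^R is a permutation mass function: μ^R ≥ 0 and ∑_{A ∈ PES(Θ)} μ^R(A) = 1. -/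
theorem right_orthogonal_sum_is_pmf {Θ : Type*} [Fintype Θ] [DecidableEq Θ]
    (μ₁ μ₂ : {l : List Θ // l.Nodup} → ℝ)
    (hμ₁0 : μ₁ ⟨[], List.nodup_nil⟩ = 0) (hμ₁nn : ∀ A, 0 ≤ μ₁ A)
    (hμ₁1 : ∑ A : {l : List Θ // l.Nodup}, μ₁ A = 1)
    (hμ₂0 : μ₂ ⟨[], List.nodup_nil⟩ = 0) (hμ₂nn : ∀ A, 0 ≤ μ₂ A)
    (hμ₂1 : ∑ A : {l : List Θ // l.Nodup}, μ₂ A = 1)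
    (K : ℝ)
    (hK : K = ∑ B : {l : List Θ // l.Nodup}, ∑ C : {l : List Θ // l.Nodup},
      if C.1.filter (fun x => decide (x ∈ B.1)) = [] then μ₁ B * μ₂ C else 0)
    (hKlt : K < 1)
    (μR : {l : List Θ // l.Nodup} → ℝ)
    (hμR : ∀ A : {l : List Θ // l.Nodup},
      μR A = if A.1 = [] then 0 else
        (1 / (1 - K)) *
          ∑ B : {l : List Θ // l.Nodup}, ∑ C : {l : List Θ // l.Nodup},
            if C.1.filter (fun x => decide (x ∈ B.1)) = A.1 then μ₁ B * μ₂ C else 0) :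
    (∀ A, 0 ≤ μR A) ∧ ∑ A : {l : List Θ // l.Nodup}, μR A = 1 := by
  have hc : (0:ℝ) < 1 - K := by linarith
  set S : {l : List Θ // l.Nodup} → ℝ := fun A =>
    ∑ B : {l : List Θ // l.Nodup}, ∑ C : {l : List Θ // l.Nodup},
      if C.1.filter (fun x => decide (x ∈ B.1)) = A.1 then μ₁ B * μ₂ C else 0 with hS
  have hSnn : ∀ A, 0 ≤ S A := by
    intro A
    apply Finset.sum_nonneg; intro B _
    apply Finset.sum_nonneg; intro C _
    split
    · exact mul_nonneg (hμ₁nn B) (hμ₂nn C)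
    · exact le_refl 0
  constructor
  · intro A
    rw [hμR A]
    split
    · exact le_refl 0
    · exact mul_nonneg (by positivity) (hSnn A)
  · have hStot : ∑ A : {l : List Θ // l.Nodup}, S A = 1 := by
      simp only [hS]
      rw [Finset.sum_comm]
      have h1 : ∀ B : {l : List Θ // l.Nodup},
          ∑ A : {l : List Θ // l.Nodup}, ∑ C : {l : List Θ // l.Nodup},
            (if C.1.filter (fun x => decide (x ∈ B.1)) = A.1 then μ₁ B * μ₂ C else 0)
          = μ₁ B := by
        intro B
        rw [Finset.sum_comm]
        have h2 : ∀ C : {l : List Θ // l.Nodup},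
            ∑ A : {l : List Θ // l.Nodup},
              (if C.1.filter (fun x => decide (x ∈ B.1)) = A.1 then μ₁ B * μ₂ C else 0)
            = μ₁ B * μ₂ C := by
          intro C
          rw [Finset.sum_eq_single (⟨C.1.filter (fun x => decide (x ∈ B.1)),
              C.2.filter _⟩ : {l : List Θ // l.Nodup})]
          · simp
          · intro b _ hb
            rw [if_neg]
            intro h
            exact hb (Subtype.ext h.symm)
          · intro h; exact absurd (Finset.mem_univ _) h
        rw [Finset.sum_congr rfl (fun C _ => h2 C), ← Finset.mul_sum, hμ₂1, mul_one]
      rw [Finset.sum_congr rfl (fun B _ => h1 B), hμ₁1]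
    have hS0 : S ⟨[], List.nodup_nil⟩ = K := by rw [hS]; exact hK.symm
    have hsub : ∀ A : {l : List Θ // l.Nodup},
        μR A = (1 / (1 - K)) * S A
          - (if A = ⟨[], List.nodup_nil⟩ then (1 / (1 - K)) * S A else 0) := by
      intro A
      rw [hμR A]
      by_cases h : A.1 = []
      · rw [if_pos h, if_pos (Subtype.ext h)]; ring
      · rw [if_neg h, if_neg (fun hh => h (congrArg Subtype.val hh))]; ring
    rw [Finset.sum_congr rfl (fun A _ => hsub A), Finset.sum_sub_distrib,
      Finset.sum_ite_eq' Finset.univ (⟨[], List.nodup_nil⟩ : {l : List Θ // l.Nodup})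
        (fun A => (1 / (1 - K)) * S A), if_pos (Finset.mem_univ _),
      ← Finset.mul_sum, hStot, hS0]
    field_simp
end

section
/- Let S be a finite set of size n ≥ 2 with strictly positive weights p, and suppose a, b ∈ S with p(a) > p(b). If σ is an ordering of S with a immediately preceding b at positions i, i+1, and σ' is obtained from σ by swapping a and b, then Sord_p(σ) > Sord_p(σ'), where Sord_p(σ) = ∏_{i=1}^{n} p(σ_i)/∑_{j=i}^{n} p(σ_j). -/
theorem adjacent_swap_decreases_sord {S : Type*} [Fintype S] [DecidableEq S]
    (hn : 2 ≤ Fintype.card S)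
    (p : S → ℝ) (hp : ∀ x, 0 < p x)
    (a b : S) (hab : p b < p a)
    (σ : Fin (Fintype.card S) ≃ S) (i j : Fin (Fintype.card S))
    (hij : (j : ℕ) = (i : ℕ) + 1) (ha : σ i = a) (hb : σ j = b) :
    (∏ i : Fin (Fintype.card S),
        p ((σ.trans (Equiv.swap a b)) i) /
          ∑ j ∈ Finset.Ici i, p ((σ.trans (Equiv.swap a b)) j)) <
    ∏ i : Fin (Fintype.card S), p (σ i) / ∑ j ∈ Finset.Ici i, p (σ j) := by
  set σ' := σ.trans (Equiv.swap a b) with hσ'def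
  have hilt : i < j := by rw [Fin.lt_def]; omega
  have hσ'i : σ' i = b := by simp [hσ'def, ha]
  have hσ'j : σ' j = a := by simp [hσ'def, hb]
  have hkey : ∀ l, l ≠ i → l ≠ j → σ' l = σ l := by
    intro l hli hlj
    have h1 : σ l ≠ a := fun h => hli (σ.injective (h.trans ha.symm))
    have h2 : σ l ≠ b := fun h => hlj (σ.injective (h.trans hb.symm))
    simp [hσ'def, Equiv.swap_apply_of_ne_of_ne h1 h2]
  have hDpos : ∀ k : Fin (Fintype.card S), 0 < ∑ l ∈ Finset.Ici k, p (σ l) :=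
    fun k => Finset.sum_pos (fun l _ => hp _) ⟨k, Finset.mem_Ici.2 le_rfl⟩
  have hden : ∀ k : Fin (Fintype.card S), k ≠ j →
      (∑ l ∈ Finset.Ici k, p (σ' l)) = ∑ l ∈ Finset.Ici k, p (σ l) := by
    intro k hk
    by_cases hki : k ≤ i
    · have hkj : k ≤ j := le_of_lt (lt_of_le_of_lt hki hilt)
      refine Finset.sum_equiv (Equiv.swap i j) ?_ ?_
      · intro l
        rcases eq_or_ne l i with rfl | hli
        · simp [Equiv.swap_apply_left, Finset.mem_Ici, hki, hkj]
        rcases eq_or_ne l j with rfl | hlj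
        · simp [Equiv.swap_apply_right, Finset.mem_Ici, hki, hkj]
        · rw [Equiv.swap_apply_of_ne_of_ne hli hlj]
      · intro l _
        rcases eq_or_ne l i with rfl | hli
        · rw [Equiv.swap_apply_left, hσ'i, hb]
        rcases eq_or_ne l j with rfl | hlj
        · rw [Equiv.swap_apply_right, hσ'j, ha]
        · rw [Equiv.swap_apply_of_ne_of_ne hli hlj, hkey l hli hlj]
    · apply Finset.sum_congr rfl
      intro l hl
      have hkl : k ≤ l := Finset.mem_Ici.1 hl
      have hjk : j < k := by
        rw [Fin.lt_def]
        rw [Fin.le_def] at hki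
        have := Fin.val_ne_iff.2 (Ne.symm hk)
        omega
      have hjl : j < l := lt_of_lt_of_le hjk hkl
      rw [hkey l (ne_of_gt (lt_trans hilt hjl)) (ne_of_gt hjl)]
  have hDj : (∑ l ∈ Finset.Ici j, p (σ l)) < ∑ l ∈ Finset.Ici j, p (σ' l) := by
    have hj : j ∈ Finset.Ici j := Finset.mem_Ici.2 le_rfl
    rw [← Finset.add_sum_erase _ (fun l => p (σ l)) hj,
        ← Finset.add_sum_erase _ (fun l => p (σ' l)) hj]
    have herase : ∑ l ∈ (Finset.Ici j).erase j, p (σ' l) =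
        ∑ l ∈ (Finset.Ici j).erase j, p (σ l) := by
      apply Finset.sum_congr rfl
      intro l hl
      have hlj : l ≠ j := (Finset.mem_erase.1 hl).1
      have hjl : j < l := lt_of_le_of_ne (Finset.mem_Ici.1 (Finset.mem_erase.1 hl).2) (Ne.symm hlj)
      rw [hkey l (ne_of_gt (lt_trans hilt hjl)) hlj]
    rw [herase, hσ'j, hb]
    exact add_lt_add_of_lt_of_le hab le_rfl
  have hnum : ∏ k, p (σ' k) = ∏ k, p (σ k) := by
    rw [Equiv.prod_comp σ' p, Equiv.prod_comp σ p]
  have key : (∏ k, p (σ' k)) / (∏ k, ∑ l ∈ Finset.Ici k, p (σ' l)) <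
      (∏ k, p (σ k)) / (∏ k, ∑ l ∈ Finset.Ici k, p (σ l)) := by
    rw [hnum]
    have hmem : j ∈ (Finset.univ : Finset (Fin (Fintype.card S))) := Finset.mem_univ j
    rw [← Finset.prod_erase_mul _ (fun k => ∑ l ∈ Finset.Ici k, p (σ' l)) hmem,
        ← Finset.prod_erase_mul _ (fun k => ∑ l ∈ Finset.Ici k, p (σ l)) hmem]
    have hPerase : (∏ k ∈ Finset.univ.erase j, ∑ l ∈ Finset.Ici k, p (σ' l)) =
        ∏ k ∈ Finset.univ.erase j, ∑ l ∈ Finset.Ici k, p (σ l) :=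
      Finset.prod_congr rfl (fun k hk => hden k (Finset.mem_erase.1 hk).1)
    rw [hPerase]
    have hPpos : 0 < ∏ k ∈ Finset.univ.erase j, ∑ l ∈ Finset.Ici k, p (σ l) :=
      Finset.prod_pos (fun k _ => hDpos k)
    have hNpos : 0 < ∏ k, p (σ k) := Finset.prod_pos (fun k _ => hp _)
    apply div_lt_div_of_pos_left hNpos (mul_pos hPpos (hDpos j))
    exact mul_lt_mul_of_pos_left hDj hPpos
  rw [← Finset.prod_div_distrib, ← Finset.prod_div_distrib] at key
  exact key
end

section
/- Let Θ be a finite set of size n with strictly positive weights p summing to 1. For the ordered support degree Sord_p on full orderings of Θ, the ordering that lists the elements in nonincreasing order of p maximizes Sord_p over all orderings of Θ. -/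
-- auxiliary: if every element of C has p-value ≤ every element of D and
-- the cardinalities agree, then the sum over C is at most the sum over D.
lemma sum_le_sum_of_card_eq {S : Type*} [DecidableEq S] (p : S → ℝ)
    (C D : Finset S) (hcard : C.card = D.card)
    (h : ∀ x ∈ C, ∀ y ∈ D, p x ≤ p y) :
    ∑ x ∈ C, p x ≤ ∑ y ∈ D, p y := by
  rcases C.eq_empty_or_nonempty with hC | hC
  · have : D = ∅ := Finset.card_eq_zero.mp (by simp [hC] at hcard; omega)
    simp [hC, this]
  · have hD : D.Nonempty := Finset.card_pos.mp (hcard ▸ Finset.card_pos.mpr hC)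
    obtain ⟨y0, hy0, hy0min⟩ := D.exists_min_image p hD
    calc ∑ x ∈ C, p x ≤ C.card • p y0 :=
          Finset.sum_le_card_nsmul C p (p y0) (fun x hx => h x hx y0 hy0)
      _ = D.card • p y0 := by rw [hcard]
      _ ≤ ∑ y ∈ D, p y :=
          Finset.card_nsmul_le_sum D p (p y0) (fun y hy => hy0min y hy)

theorem sorted_ordering_maximizes_sord {S : Type*} [Fintype S] [DecidableEq S]
    (p : S → ℝ) (hp : ∀ x, 0 < p x) (hp1 : ∑ x : S, p x = 1)
    (σ : Fin (Fintype.card S) ≃ S)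
    (hσ : ∀ i j : Fin (Fintype.card S), i ≤ j → p (σ j) ≤ p (σ i)) :
    ∀ τ : Fin (Fintype.card S) ≃ S,
      (∏ i : Fin (Fintype.card S), p (τ i) / ∑ j ∈ Finset.Ici i, p (τ j)) ≤
      ∏ i : Fin (Fintype.card S), p (σ i) / ∑ j ∈ Finset.Ici i, p (σ j) := by
  intro τ
  -- tail sums are positive
  have hpos : ∀ (ρ : Fin (Fintype.card S) ≃ S) (i : Fin (Fintype.card S)), 0 < ∑ j ∈ Finset.Ici i, p (ρ j) := by
    intro ρ i
    exact Finset.sum_pos (fun j _ => hp _) ⟨i, Finset.mem_Ici.mpr le_rfl⟩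
  -- key: tail sums of σ are minimal
  have key : ∀ i : Fin (Fintype.card S), ∑ j ∈ Finset.Ici i, p (σ j) ≤ ∑ j ∈ Finset.Ici i, p (τ j) := by
    intro i
    have hA : ∑ j ∈ Finset.Ici i, p (σ j) = ∑ x ∈ (Finset.Ici i).image σ, p x :=
      (Finset.sum_image (fun a _ b _ h => σ.injective h)).symm
    have hB : ∑ j ∈ Finset.Ici i, p (τ j) = ∑ x ∈ (Finset.Ici i).image τ, p x :=
      (Finset.sum_image (fun a _ b _ h => τ.injective h)).symm
    rw [hA, hB]
    set A := (Finset.Ici i).image σ with hAdef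
    set B := (Finset.Ici i).image τ with hBdef
    have hcardA : A.card = (Finset.Ici i).card :=
      Finset.card_image_of_injective _ σ.injective
    have hcardB : B.card = (Finset.Ici i).card :=
      Finset.card_image_of_injective _ τ.injective
    have hsplitA : ∑ x ∈ A, p x = ∑ x ∈ A ∩ B, p x + ∑ x ∈ A \ B, p x :=
      (Finset.sum_inter_add_sum_sdiff A B p).symm
    have hsplitB : ∑ x ∈ B, p x = ∑ x ∈ A ∩ B, p x + ∑ x ∈ B \ A, p x := by
      rw [← Finset.sum_inter_add_sum_sdiff B A p, Finset.inter_comm]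
    rw [hsplitA, hsplitB]
    apply add_le_add_right
    apply sum_le_sum_of_card_eq
    · have h1 := Finset.card_inter_add_card_sdiff A B
      have h2 := Finset.card_inter_add_card_sdiff B A
      rw [Finset.inter_comm] at h2
      omega
    · intro x hx y hy
      obtain ⟨j, hj, rfl⟩ := Finset.mem_image.mp (Finset.mem_sdiff.mp hx).1
      have hyB := (Finset.mem_sdiff.mp hy).1
      have hyA := (Finset.mem_sdiff.mp hy).2
      -- y = σ k for some k < i
      obtain ⟨k, rfl⟩ := σ.surjective y
      have hk : ¬ (i ≤ k) := by
        intro hik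
        exact hyA (Finset.mem_image.mpr ⟨k, Finset.mem_Ici.mpr hik, rfl⟩)
      have hkj : k ≤ j := le_trans (le_of_not_ge hk) (Finset.mem_Ici.mp hj)
      exact hσ k j hkj
  -- numerators products agree
  have hnum : ∀ ρ : Fin (Fintype.card S) ≃ S, ∏ i : Fin (Fintype.card S), p (ρ i) = ∏ x : S, p x := by
    intro ρ; exact Equiv.prod_comp ρ p
  have hnumpos : 0 < ∏ x : S, p x := Finset.prod_pos (fun x _ => hp x)
  rw [Finset.prod_div_distrib, Finset.prod_div_distrib, hnum σ, hnum τ]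
  apply div_le_div_of_nonneg_left hnumpos.le
    (Finset.prod_pos (fun i _ => hpos σ i))
    (Finset.prod_le_prod (fun i _ => (hpos σ i).le) (fun i _ => key i))
end
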